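/- The function φ₁(z) = arctan(1/z)/z is completely monotone on (0,∞): it admits the Laplace-transform representation φ₁(z) = ∫₀^∞ e^{-zt} Si(t) dt where Si(t) = ∫₀^t (sin τ)/τ dτ ≥ 0 for t ≥ 0, hence (-1)ⁿ φ₁⁽ⁿ⁾(z) ≥ 0 for all n ≥ 0 and z > 0. -/

import Mathlib

open MeasureTheory Real Set intervalIntegral Filter Topology

noncomputable def Si (t : ℝ) : ℝ := ∫ τ in (0:ℝ)..t, Real.sin τ / τ

noncomputable def phi₁ (z : ℝ) : ℝ := Real.arctan (1 / z) / z


lemma abs_sinc_le_one (τ : ℝ) : |Real.sin τ / τ| ≤ 1 := by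
  rcases eq_or_ne τ 0 with h | h
  · simp [h]
  · rw [abs_div, div_le_one (abs_pos.2 h)]
    exact Real.abs_sin_le_abs

lemma sinc_intervalIntegrable (a b : ℝ) :
    IntervalIntegrable (fun τ => Real.sin τ / τ) volume a b := by
  rw [intervalIntegrable_iff]
  haveI : IsFiniteMeasure (volume.restrict (Set.uIoc a b)) :=
    ⟨by rw [Measure.restrict_apply_univ]; exact measure_Ioc_lt_top⟩
  refine Integrable.mono' (integrable_const 1) ?_ ?_
  · exact (Real.measurable_sin.div measurable_id).aestronglyMeasurable
  · exact Filter.Eventually.of_forall fun τ => abs_sinc_le_one τ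

lemma Si_sub (a b : ℝ) : Si b = Si a + ∫ τ in a..b, Real.sin τ / τ := by
  have := intervalIntegral.integral_add_adjacent_intervals
    (sinc_intervalIntegrable 0 a) (sinc_intervalIntegrable a b)
  unfold Si; linarith

lemma pair_nonneg (k : ℕ) :
    0 ≤ ∫ τ in (2*k*π)..(2*k*π + 2*π), Real.sin τ / τ := by
  have hπ := Real.pi_pos
  have h1 : (2*(k:ℝ)*π) ≤ 2*k*π + π := by linarith
  have hI : IntervalIntegrable (fun τ => Real.sin (τ+π)/(τ+π)) volume (2*k*π) (2*k*π+π) := by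
    have := (sinc_intervalIntegrable (2*(k:ℝ)*π + π) (2*(k:ℝ)*π + π + π)).comp_add_right π
    simpa only [add_sub_cancel_right] using this
  rw [← intervalIntegral.integral_add_adjacent_intervals (b := 2*k*π + π)
    (sinc_intervalIntegrable _ _) (sinc_intervalIntegrable _ _)]
  have h2 : ∫ τ in (2*(k:ℝ)*π + π)..(2*k*π + 2*π), Real.sin τ / τ
      = ∫ τ in (2*(k:ℝ)*π)..(2*k*π + π), Real.sin (τ + π) / (τ + π) := by
    rw [show 2*(k:ℝ)*π + 2*π = 2*k*π + π + π by ring]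
    rw [intervalIntegral.integral_comp_add_right (fun τ => Real.sin τ / τ) π]
  rw [h2, ← intervalIntegral.integral_add (sinc_intervalIntegrable _ _) hI]
  apply intervalIntegral.integral_nonneg h1
  intro u hu
  have hu0 : 0 ≤ u := le_trans (by positivity) hu.1
  have hs : 0 ≤ Real.sin u := by
    have : Real.sin u = Real.sin (u - k * (2*π)) := (Real.sin_periodic.sub_nat_mul_eq k).symm
    rw [this]
    apply Real.sin_nonneg_of_nonneg_of_le_pi
    · have := hu.1; linarith
    · have := hu.2; linarith
  rw [Real.sin_add_pi]
  rcases eq_or_lt_of_le hu0 with h0 | h0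
  · simp [← h0]
  · have h3 : (0:ℝ) < u + π := by linarith
    have : Real.sin u / (u + π) ≤ Real.sin u / u := by gcongr <;> linarith
    rw [neg_div]
    linarith



lemma Si_min_nonneg (k : ℕ) : 0 ≤ Si (2*k*π) := by
  induction k with
  | zero => simp [Si]
  | succ n ih =>
    have h : Si (2*(n+1)*π) = Si (2*n*π) + ∫ τ in (2*n*π)..(2*n*π + 2*π), Real.sin τ / τ := by
      rw [show 2*((n:ℝ)+1)*π = 2*n*π + 2*π by ring]
      exact Si_sub _ _
    push_cast [h]
    have := pair_nonneg n
    push_cast at ih this ⊢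
    linarith

lemma Si_nonneg (t : ℝ) (ht : 0 ≤ t) : 0 ≤ Si t := by
  have hπ := Real.pi_pos
  set k : ℕ := ⌊t / (2*π)⌋₊ with hk
  have hk1 : 2*(k:ℝ)*π ≤ t := by
    have := Nat.floor_le (by positivity : 0 ≤ t / (2*π))
    rw [← hk] at this
    calc 2*(k:ℝ)*π = (k:ℝ) * (2*π) := by ring
    _ ≤ t / (2*π) * (2*π) := by gcongr
    _ = t := by field_simp
  have hk2 : t < 2*(k:ℝ)*π + 2*π := by
    have := Nat.lt_floor_add_one (t / (2*π))
    rw [← hk] at this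
    have h2 : t / (2*π) * (2*π) < ((k:ℝ)+1) * (2*π) := by gcongr
    rw [div_mul_cancel₀ _ (by positivity : (2*π) ≠ 0)] at h2
    linarith
  rcases le_or_gt t (2*k*π + π) with hcase | hcase
  · -- t in increasing half
    rw [Si_sub (2*k*π) t]
    have : 0 ≤ ∫ τ in (2*(k:ℝ)*π)..t, Real.sin τ / τ := by
      apply intervalIntegral.integral_nonneg hk1
      intro u hu
      have hu0 : 0 ≤ u := le_trans (by positivity) hu.1
      have hs : 0 ≤ Real.sin u := by
        have : Real.sin u = Real.sin (u - k * (2*π)) := (Real.sin_periodic.sub_nat_mul_eq k).symm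
        rw [this]
        apply Real.sin_nonneg_of_nonneg_of_le_pi
        · have := hu.1; linarith
        · have := hu.2; linarith
      positivity
    linarith [Si_min_nonneg k]
  · -- t in decreasing half: Si t ≥ Si (2(k+1)π)
    have key : Si (2*(k:ℝ)*π + 2*π) = Si t + ∫ τ in t..(2*(k:ℝ)*π + 2*π), Real.sin τ / τ :=
      Si_sub t _
    have hneg : ∫ τ in t..(2*(k:ℝ)*π + 2*π), Real.sin τ / τ ≤ 0 := by
      have h0 : 0 ≤ ∫ τ in t..(2*(k:ℝ)*π + 2*π), -(Real.sin τ / τ) := by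
        apply intervalIntegral.integral_nonneg hk2.le
        intro u hu
        rw [neg_nonneg]
        have hu0 : 0 < u := lt_of_lt_of_le (by nlinarith [Real.pi_pos, mul_nonneg (Nat.cast_nonneg k : (0:ℝ) ≤ k) Real.pi_pos.le]) hu.1
        have hs : Real.sin u ≤ 0 := by
          have he : Real.sin u = Real.sin (u - k * (2*π)) := (Real.sin_periodic.sub_nat_mul_eq k).symm
          have h2 : Real.sin (u - k*(2*π) - π) = -Real.sin (u - k*(2*π)) := Real.sin_sub_pi _
          have h3 : 0 ≤ Real.sin (u - k*(2*π) - π) := by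
            apply Real.sin_nonneg_of_nonneg_of_le_pi
            · have := hu.1; linarith
            · have := hu.2; linarith
          rw [he]; linarith
        exact div_nonpos_of_nonpos_of_nonneg hs hu0.le
      rw [intervalIntegral.integral_neg] at h0
      linarith
    have h4 : 0 ≤ Si (2*(k:ℝ)*π + 2*π) := by
      have := Si_min_nonneg (k+1)
      have he : 2*((k:ℝ)+1)*π = 2*(k:ℝ)*π + 2*π := by ring
      push_cast [he] at this
      linarith
    linarith


lemma exp_cos_integrable {z : ℝ} (hz : 0 < z) (u : ℝ) :
    IntegrableOn (fun t => Real.exp (-z*t) * Real.cos (u*t)) (Ioi (0:ℝ)) := by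
  apply Integrable.mono' (exp_neg_integrableOn_Ioi 0 hz)
  · exact (((Real.continuous_exp.comp (continuous_const.mul continuous_id)).mul
      (Real.continuous_cos.comp (continuous_const.mul continuous_id)))).aestronglyMeasurable
  · filter_upwards with t
    rw [norm_mul, Real.norm_eq_abs, Real.norm_eq_abs, Real.abs_exp]
    calc Real.exp (-z*t) * |Real.cos (u*t)| ≤ Real.exp (-z*t) * 1 := by
          gcongr; exact Real.abs_cos_le_one _
    _ = Real.exp (-z*t) := mul_one _

lemma laplace_cos {z : ℝ} (hz : 0 < z) (u : ℝ) :
    ∫ t in Ioi (0:ℝ), Real.exp (-z*t) * Real.cos (u*t) = z / (z^2 + u^2) := by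
  have hD : (0:ℝ) < z^2 + u^2 := by positivity
  set F : ℝ → ℝ := fun t => Real.exp (-z*t) * (u * Real.sin (u*t) - z * Real.cos (u*t)) / (z^2+u^2)
    with hF
  have hderiv : ∀ t : ℝ, HasDerivAt F (Real.exp (-z*t) * Real.cos (u*t)) t := by
    intro t
    have h1 : HasDerivAt (fun t => Real.exp (-z*t)) (-z * Real.exp (-z*t)) t := by
      simpa [mul_comm] using (((hasDerivAt_id t).const_mul (-z)).exp)
    have h2 : HasDerivAt (fun t => u * Real.sin (u*t) - z * Real.cos (u*t))
        (u * (u * Real.cos (u*t)) - z * (-(u * Real.sin (u*t)))) t := by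
      have hs : HasDerivAt (fun t => Real.sin (u*t)) (Real.cos (u*t) * u) t := by
        simpa using ((hasDerivAt_id t).const_mul u).sin
      have hc : HasDerivAt (fun t => Real.cos (u*t)) (-Real.sin (u*t) * u) t := by
        simpa using ((hasDerivAt_id t).const_mul u).cos
      have := ((hs.const_mul u).sub (hc.const_mul z))
      exact this.congr_deriv (by ring)
    have := (h1.mul h2).div_const (z^2+u^2)
    refine this.congr_deriv ?_
    field_simp
    ring
  have hbound : ∀ t, ‖F t‖ ≤ Real.exp (-z*t) * ((|u|+|z|)/(z^2+u^2)) := by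
    intro t
    rw [Real.norm_eq_abs, hF]
    simp only
    rw [abs_div, abs_of_pos hD, abs_mul, Real.abs_exp, mul_div_assoc]
    gcongr
    rw [sub_eq_add_neg]
    refine (abs_add_le _ _).trans ?_
    rw [abs_neg, abs_mul, abs_mul]
    calc |u| * |Real.sin (u*t)| + |z| * |Real.cos (u*t)| ≤ |u| * 1 + |z| * 1 := by
          gcongr
          · exact Real.abs_sin_le_one _
          · exact Real.abs_cos_le_one _
    _ = |u| + |z| := by ring
  have htend : Tendsto F atTop (𝓝 0) := by
    have hb : Tendsto (fun t => Real.exp (-z*t)) atTop (𝓝 0) := by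
      apply Real.tendsto_exp_atBot.comp
      exact tendsto_id.const_mul_atTop_of_neg (by linarith)
    apply squeeze_zero_norm hbound
    simpa using hb.mul_const ((|u|+|z|)/(z^2+u^2))
  rw [integral_Ioi_of_hasDerivAt_of_tendsto' (fun x _ => hderiv x) (exp_cos_integrable hz u) htend]
  rw [hF]
  norm_num
  ring


lemma cos_int_eq_sinc {t : ℝ} (ht : t ≠ 0) :
    ∫ u in (0:ℝ)..1, Real.cos (u*t) = Real.sin t / t := by
  rw [intervalIntegral.integral_comp_mul_right Real.cos ht]
  simp [integral_cos, div_eq_inv_mul]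

lemma arctan_int {z : ℝ} (hz : 0 < z) :
    ∫ u in (0:ℝ)..1, z / (z^2 + u^2) = Real.arctan (1/z) := by
  have h : ∀ u ∈ uIcc (0:ℝ) 1, HasDerivAt (fun u => Real.arctan (u/z)) (z/(z^2+u^2)) u := by
    intro u _
    have h1 : HasDerivAt (fun u : ℝ => u/z) (1/z) u := (hasDerivAt_id u).div_const z
    have := (Real.hasDerivAt_arctan (u/z)).comp u h1
    refine this.congr_deriv ?_
    field_simp
  have hint : IntervalIntegrable (fun u => z/(z^2+u^2)) volume 0 1 := by
    apply Continuous.intervalIntegrable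
    apply continuous_const.div (by continuity)
    intro u; positivity
  rw [intervalIntegral.integral_eq_sub_of_hasDerivAt h hint]
  simp

lemma laplace_sinc {z : ℝ} (hz : 0 < z) :
    ∫ t in Ioi (0:ℝ), Real.exp (-z*t) * (Real.sin t / t) = Real.arctan (1/z) := by
  have key : ∫ t in Ioi (0:ℝ), Real.exp (-z*t) * (Real.sin t / t)
      = ∫ t in Ioi (0:ℝ), ∫ u in Ioc (0:ℝ) 1, Real.exp (-z*t) * Real.cos (u*t) := by
    apply setIntegral_congr_fun measurableSet_Ioi
    intro t ht
    simp only []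
    rw [MeasureTheory.integral_const_mul, ← intervalIntegral.integral_of_le zero_le_one,
      cos_int_eq_sinc (ne_of_gt ht)]
  rw [key]
  have hswap : ∫ t in Ioi (0:ℝ), ∫ u in Ioc (0:ℝ) 1, Real.exp (-z*t) * Real.cos (u*t)
      = ∫ u in Ioc (0:ℝ) 1, ∫ t in Ioi (0:ℝ), Real.exp (-z*t) * Real.cos (u*t) := by
    apply MeasureTheory.integral_integral_swap
    have hmeas : AEStronglyMeasurable (Function.uncurry fun t u => Real.exp (-z*t) * Real.cos (u*t))
        ((volume.restrict (Ioi (0:ℝ))).prod (volume.restrict (Ioc (0:ℝ) 1))) := by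
      apply Continuous.aestronglyMeasurable
      exact (Real.continuous_exp.comp (continuous_const.mul continuous_fst)).mul
        (Real.continuous_cos.comp (continuous_snd.mul continuous_fst))
    apply Integrable.mono' (g := fun p => Real.exp (-z*p.1) * 1) ?_ hmeas
    · filter_upwards with p
      simp only [Function.uncurry]
      rw [norm_mul, Real.norm_eq_abs, Real.norm_eq_abs, Real.abs_exp]
      gcongr
      exact Real.abs_cos_le_one _
    · exact Integrable.mul_prod (exp_neg_integrableOn_Ioi 0 hz) (integrable_const 1)
  rw [hswap]
  have h2 : ∫ u in Ioc (0:ℝ) 1, ∫ t in Ioi (0:ℝ), Real.exp (-z*t) * Real.cos (u*t)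
      = ∫ u in Ioc (0:ℝ) 1, z / (z^2+u^2) := by
    apply setIntegral_congr_fun measurableSet_Ioc
    intro u _
    exact laplace_cos hz u
  rw [h2, ← intervalIntegral.integral_of_le zero_le_one, arctan_int hz]



lemma exp_int_Ioi {z : ℝ} (hz : 0 < z) (a : ℝ) :
    ∫ t in Ioi a, Real.exp (-z*t) = Real.exp (-z*a) / z := by
  have hderiv : ∀ t : ℝ, HasDerivAt (fun t => -Real.exp (-z*t)/z) (Real.exp (-z*t)) t := by
    intro t
    have h1 : HasDerivAt (fun t => Real.exp (-z*t)) (-z * Real.exp (-z*t)) t := by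
      simpa [mul_comm] using (((hasDerivAt_id t).const_mul (-z)).exp)
    have := (h1.neg).div_const z
    refine this.congr_deriv ?_
    field_simp
  have htend : Tendsto (fun t => -Real.exp (-z*t)/z) atTop (𝓝 0) := by
    have hb : Tendsto (fun t => Real.exp (-z*t)) atTop (𝓝 0) := by
      apply Real.tendsto_exp_atBot.comp
      exact tendsto_id.const_mul_atTop_of_neg (by linarith)
    simpa using (hb.neg).div_const z
  rw [integral_Ioi_of_hasDerivAt_of_tendsto' (fun x _ => hderiv x)
    (exp_neg_integrableOn_Ioi a hz) htend]
  field_simp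
  ring

lemma laplace_Si {z : ℝ} (hz : 0 < z) :
    ∫ t in Ioi (0:ℝ), Real.exp (-z*t) * Si t = Real.arctan (1/z) / z := by
  set f : ℝ → ℝ → ℝ := fun t τ => if τ ≤ t then Real.exp (-z*t) * (Real.sin τ / τ) else 0 with hf
  have hmeas : AEStronglyMeasurable (Function.uncurry f)
      ((volume.restrict (Ioi (0:ℝ))).prod (volume.restrict (Ioi (0:ℝ)))) := by
    apply Measurable.aestronglyMeasurable
    apply Measurable.ite (measurableSet_le measurable_snd measurable_fst)
    · exact ((Real.measurable_exp.comp (measurable_fst.const_mul (-z))).mul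
        ((Real.measurable_sin.comp measurable_snd).div measurable_snd))
    · exact measurable_const
  have hint : Integrable (Function.uncurry f)
      ((volume.restrict (Ioi (0:ℝ))).prod (volume.restrict (Ioi (0:ℝ)))) := by
    apply Integrable.mono'
      (g := fun p : ℝ × ℝ => Real.exp (-(z/2)*p.1) * Real.exp (-(z/2)*p.2)) ?_ hmeas
    · rw [Measure.prod_restrict]
      filter_upwards [ae_restrict_mem ((measurableSet_Ioi).prod measurableSet_Ioi)] with p hp
      obtain ⟨hp1, hp2⟩ := hp
      simp only [Function.uncurry, hf]
      split_ifs with h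
      · rw [norm_mul, Real.norm_eq_abs, Real.norm_eq_abs, Real.abs_exp]
        calc Real.exp (-z*p.1) * |Real.sin p.2 / p.2| ≤ Real.exp (-z*p.1) * 1 := by
              gcongr; exact abs_sinc_le_one _
        _ = Real.exp (-(z/2)*p.1) * Real.exp (-(z/2)*p.1) := by
              rw [mul_one, ← Real.exp_add]; ring_nf
        _ ≤ Real.exp (-(z/2)*p.1) * Real.exp (-(z/2)*p.2) := by
              apply mul_le_mul_of_nonneg_left _ (Real.exp_pos _).le
              apply Real.exp_le_exp.2
              nlinarith
      · simp [Real.exp_pos]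
        positivity
    · exact Integrable.mul_prod (exp_neg_integrableOn_Ioi 0 (by linarith))
        (exp_neg_integrableOn_Ioi 0 (by linarith))
  have lhs_eq : ∫ t in Ioi (0:ℝ), Real.exp (-z*t) * Si t
      = ∫ t in Ioi (0:ℝ), ∫ τ in Ioi (0:ℝ), f t τ := by
    apply setIntegral_congr_fun measurableSet_Ioi
    intro t ht
    show Real.exp (-z*t) * Si t = ∫ τ in Ioi (0:ℝ), f t τ
    have heq : (fun τ => f t τ) = (Iic t).indicator (fun τ => Real.exp (-z*t) * (Real.sin τ / τ)) := by
      ext τ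
      simp only [hf, indicator, mem_Iic]
    rw [heq, MeasureTheory.setIntegral_indicator measurableSet_Iic]
    have : Ioi (0:ℝ) ∩ Iic t = Ioc 0 t := by
      ext x; simp [mem_Ioc, and_comm]
    rw [this, MeasureTheory.integral_const_mul]
    have : Si t = ∫ τ in Ioc (0:ℝ) t, Real.sin τ / τ := by
      rw [← intervalIntegral.integral_of_le (le_of_lt ht)]
      rfl
    rw [this]
  have rhs_eq : ∫ τ in Ioi (0:ℝ), ∫ t in Ioi (0:ℝ), f t τ
      = ∫ τ in Ioi (0:ℝ), (Real.sin τ / τ) * (Real.exp (-z*τ) / z) := by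
    apply setIntegral_congr_fun measurableSet_Ioi
    intro τ hτ
    show (∫ t in Ioi (0:ℝ), f t τ) = (Real.sin τ / τ) * (Real.exp (-z*τ) / z)
    have heq : (fun t => f t τ) = (Ici τ).indicator (fun t => Real.exp (-z*t) * (Real.sin τ / τ)) := by
      ext t
      simp only [hf, indicator, mem_Ici]
    simp only [heq]
    rw [MeasureTheory.setIntegral_indicator measurableSet_Ici]
    have h1 : Ioi (0:ℝ) ∩ Ici τ = Ici τ := by
      apply inter_eq_self_of_subset_right
      intro x hx
      exact lt_of_lt_of_le hτ (mem_Ici.1 hx)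
    rw [h1, integral_Ici_eq_integral_Ioi]
    rw [MeasureTheory.integral_mul_const, exp_int_Ioi hz, mul_comm]
  rw [lhs_eq, MeasureTheory.integral_integral_swap hint, rhs_eq]
  have : ∀ τ ∈ Ioi (0:ℝ), (Real.sin τ / τ) * (Real.exp (-z*τ) / z)
      = (1/z) * (Real.exp (-z*τ) * (Real.sin τ / τ)) := by
    intro τ _; ring
  rw [setIntegral_congr_fun measurableSet_Ioi this, MeasureTheory.integral_const_mul,
    laplace_sinc hz]
  ring



lemma Si_continuous : Continuous Si :=
  intervalIntegral.continuous_primitive (fun a b => sinc_intervalIntegrable a b) 0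

lemma abs_Si_le (t : ℝ) : |Si t| ≤ |t| := by
  have := intervalIntegral.norm_integral_le_of_norm_le_const
    (C := 1) (f := fun τ => Real.sin τ / τ) (a := 0) (b := t)
    (fun x _ => by rw [Real.norm_eq_abs]; exact abs_sinc_le_one x)
  simpa [Si, Real.norm_eq_abs] using this

lemma integrable_pow_exp (k : ℕ) {c : ℝ} (hc : 0 < c) :
    IntegrableOn (fun t => t^k * Real.exp (-c*t)) (Ioi (0:ℝ)) := by
  apply integrable_of_isBigO_exp_neg (half_pos hc)
  · exact (continuous_pow k).continuousOn.mul
      (Real.continuous_exp.comp (continuous_const.mul continuous_id)).continuousOn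
  · have h0 : Tendsto (fun t : ℝ => t^k * Real.exp (-(c/2)*t)) atTop (𝓝 0) := by
      have h := ((Real.tendsto_pow_mul_exp_neg_atTop_nhds_zero k).comp
        (tendsto_id.const_mul_atTop (half_pos hc))).div_const ((c/2)^k)
      simp only [zero_div] at h
      convert h using 2 with t
      simp only [Function.comp]
      rw [mul_pow]
      simp only [id]
      field_simp
    have hO : (fun t : ℝ => t^k * Real.exp (-(c/2)*t)) =O[atTop] (fun _ => (1:ℝ)) :=
      h0.isBigO_one ℝ
    have := hO.mul (Asymptotics.isBigO_refl (fun t : ℝ => Real.exp (-(c/2)*t)) atTop)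
    apply Asymptotics.IsBigO.congr' this ?_ ?_
    · filter_upwards with t
      rw [mul_assoc, ← Real.exp_add]
      ring_nf
    · filter_upwards with t
      rw [one_mul]

lemma integrand_continuous (n : ℕ) (z : ℝ) :
    Continuous (fun t : ℝ => (-t)^n * Real.exp (-z*t) * Si t) :=
  ((continuous_neg.pow n).mul
    (Real.continuous_exp.comp (continuous_const.mul continuous_id))).mul Si_continuous

lemma integrand_bound (n : ℕ) {z t : ℝ} (ht : 0 < t) :
    ‖(-t)^n * Real.exp (-z*t) * Si t‖ ≤ t^(n+1) * Real.exp (-z*t) := by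
  rw [Real.norm_eq_abs, abs_mul, abs_mul, abs_pow, abs_neg, abs_of_pos ht, Real.abs_exp]
  calc t^n * Real.exp (-z*t) * |Si t| ≤ t^n * Real.exp (-z*t) * t := by
        gcongr
        calc |Si t| ≤ |t| := abs_Si_le t
        _ = t := abs_of_pos ht
  _ = t^(n+1) * Real.exp (-z*t) := by ring

lemma integrand_integrable (n : ℕ) {z : ℝ} (hz : 0 < z) :
    IntegrableOn (fun t => (-t)^n * Real.exp (-z*t) * Si t) (Ioi (0:ℝ)) := by
  apply Integrable.mono' (integrable_pow_exp (n+1) hz)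
  · exact (integrand_continuous n z).aestronglyMeasurable.restrict
  · filter_upwards [ae_restrict_mem measurableSet_Ioi] with t ht
    exact integrand_bound n ht

lemma hasDeriv_In (n : ℕ) {z : ℝ} (hz : 0 < z) :
    HasDerivAt (fun y => ∫ t in Ioi (0:ℝ), (-t)^n * Real.exp (-y*t) * Si t)
      (∫ t in Ioi (0:ℝ), (-t)^(n+1) * Real.exp (-z*t) * Si t) z := by
  have hε : (0:ℝ) < z/2 := half_pos hz
  have key := _root_.hasDerivAt_integral_of_dominated_loc_of_deriv_le
    (F := fun y t => (-t)^n * Real.exp (-y*t) * Si t)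
    (F' := fun y t => (-t)^(n+1) * Real.exp (-y*t) * Si t)
    (x₀ := z) (s := Metric.ball z (z/2))
    (bound := fun t => t^(n+2) * Real.exp (-(z/2)*t))
    (μ := volume.restrict (Ioi (0:ℝ))) (Metric.ball_mem_nhds z hε)
    ?_ ?_ ?_ ?_ ?_ ?_
  · exact key.2
  · filter_upwards with y
    exact (integrand_continuous n y).aestronglyMeasurable.restrict
  · exact integrand_integrable n hz
  · exact (integrand_continuous (n+1) z).aestronglyMeasurable.restrict
  · filter_upwards [ae_restrict_mem measurableSet_Ioi] with t ht
    intro y hy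
    have hy2 : z/2 < y := by
      have := abs_lt.1 (mem_ball_iff_norm.1 hy)
      linarith [this.1]
    calc ‖(-t)^(n+1) * Real.exp (-y*t) * Si t‖ ≤ t^(n+2) * Real.exp (-y*t) :=
          integrand_bound (n+1) ht
    _ ≤ t^(n+2) * Real.exp (-(z/2)*t) :=
          mul_le_mul_of_nonneg_left (Real.exp_le_exp.2 (by nlinarith [mul_nonneg (le_of_lt (sub_pos.2 hy2)) (le_of_lt (mem_Ioi.1 ht))]))
            (pow_nonneg (le_of_lt ht) _)
  · apply Integrable.mono' (integrable_pow_exp (n+2) hε)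
    · exact (((continuous_pow (n+2)).mul
        (Real.continuous_exp.comp (continuous_const.mul continuous_id)))).aestronglyMeasurable.restrict
    · filter_upwards [ae_restrict_mem measurableSet_Ioi] with t ht
      rw [Real.norm_eq_abs, abs_mul, abs_pow, abs_of_pos ht, Real.abs_exp]
  · filter_upwards [ae_restrict_mem measurableSet_Ioi] with t ht
    intro y hy
    have h1 : HasDerivAt (fun y => Real.exp (-y*t)) (-t * Real.exp (-y*t)) y := by
      have : HasDerivAt (fun y : ℝ => -y*t) (-t) y := by
        simpa using ((hasDerivAt_id y).neg.mul_const t)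
      simpa [mul_comm] using this.exp
    have := (h1.const_mul ((-t)^n)).mul_const (Si t)
    refine this.congr_deriv ?_
    rw [pow_succ]
    ring

lemma iter_formula (n : ℕ) : ∀ z : ℝ, 0 < z →
    iteratedDeriv n phi₁ z = ∫ t in Ioi (0:ℝ), (-t)^n * Real.exp (-z*t) * Si t := by
  induction n with
  | zero =>
    intro z hz
    rw [iteratedDeriv_zero]
    rw [show phi₁ z = Real.arctan (1/z) / z from rfl, ← laplace_Si hz]
    apply setIntegral_congr_fun measurableSet_Ioi
    intro t _
    simp
  | succ n ih =>
    intro z hz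
    rw [iteratedDeriv_succ]
    have heq : iteratedDeriv n phi₁ =ᶠ[𝓝 z]
        (fun y => ∫ t in Ioi (0:ℝ), (-t)^n * Real.exp (-y*t) * Si t) := by
      filter_upwards [Ioi_mem_nhds hz] with y hy
      exact ih y hy
    rw [heq.deriv_eq]
    exact (hasDeriv_In n hz).deriv

lemma part3 (n : ℕ) (z : ℝ) (hz : 0 < z) :
    0 ≤ (-1 : ℝ) ^ n * iteratedDeriv n phi₁ z := by
  rw [iter_formula n z hz, ← MeasureTheory.integral_const_mul]
  apply setIntegral_nonneg measurableSet_Ioi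
  intro t ht
  have h1 : (-1:ℝ)^n * ((-t)^n * Real.exp (-z*t) * Si t)
      = t^n * Real.exp (-z*t) * Si t := by
    rw [← mul_assoc, ← mul_assoc, ← mul_pow]
    ring_nf
  rw [h1]
  have hSi : 0 ≤ Si t := Si_nonneg t (le_of_lt ht)
  have htn : (0:ℝ) ≤ t^n := pow_nonneg (le_of_lt ht) n
  have he : (0:ℝ) ≤ Real.exp (-z*t) := (Real.exp_pos _).le
  positivity

theorem phi₁_completely_monotone :
    (∀ t : ℝ, 0 ≤ t → 0 ≤ Si t) ∧
    (∀ z : ℝ, 0 < z → phi₁ z = ∫ t in Set.Ioi (0:ℝ), Real.exp (-z * t) * Si t) ∧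
    (∀ n : ℕ, ∀ z : ℝ, 0 < z → 0 ≤ (-1 : ℝ) ^ n * iteratedDeriv n phi₁ z) := by
  refine ⟨Si_nonneg, fun z hz => ?_, part3⟩
  rw [show phi₁ z = Real.arctan (1/z) / z from rfl, ← laplace_Si hz]
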